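/- Fix n ≥ 2, N ≥ 1, and 1 ≤ θ ≤ n. Then any partition of the product space ({0,1}^N)^n into Π_θ^N-monochromatic boxes A₁ × ⋯ × Aₙ (with Aᵢ ⊆ {0,1}^N) has at least C(n+1,θ)^N parts. -/

import Mathlib

/-- The Hamming weight of the `j`-th column of an `n × N` Boolean measurement matrix. -/
def colWeight {n N : ℕ} (M : Fin n → Fin N → Bool) (j : Fin N) : ℕ :=
  (Finset.univ.filter fun i => M i j = true).card

/-- The block threshold function `Π_θ^N`: its `j`-th coordinate is `1` iff the `j`-th
column of `M` has at least `θ` ones. -/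
def blockThreshold {n N : ℕ} (θ : ℕ) (M : Fin n → Fin N → Bool) : Fin N → Bool :=
  fun j => decide (θ ≤ colWeight M j)

/-- Any partition of `({0,1}^N)^n` into `Π_θ^N`-monochromatic boxes has
at least `C(n+1,θ)^N` parts. -/
def boolEquivFinset (n : ℕ) : (Fin n → Bool) ≃ Finset (Fin n) where
  toFun v := Finset.univ.filter (fun r => v r = true)
  invFun s := fun r => decide (r ∈ s)
  left_inv v := by funext r; simp [Finset.mem_filter]
  right_inv s := by ext r; simp [Finset.mem_filter]

theorem card_weight_eq (n k : ℕ) :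
    Fintype.card {v : Fin n → Bool // (Finset.univ.filter fun r => v r = true).card = k}
      = n.choose k := by
  have e : {v : Fin n → Bool // (Finset.univ.filter fun r => v r = true).card = k}
      ≃ {s : Finset (Fin n) // s.card = k} :=
    Equiv.subtypeEquiv (boolEquivFinset n) (fun v => Iff.rfl)
  rw [Fintype.card_congr e]
  simpa using Fintype.card_finset_len (α := Fin n) k

theorem card_weight_or (n a b : ℕ) (hab : a ≠ b) :
    Fintype.card {v : Fin n → Bool //
      (Finset.univ.filter fun r => v r = true).card = a ∨
      (Finset.univ.filter fun r => v r = true).card = b}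
      = n.choose a + n.choose b := by
  rw [Fintype.card_subtype_or_disjoint, card_weight_eq, card_weight_eq]
  intro x hxp hxq v hv
  have h1 := hxp v hv
  have h2 := hxq v hv
  exact (hab (h1.symm.trans h2)).elim

theorem threshold_partition_lower_bound (n N θ : ℕ)
    (hn : 2 ≤ n) (hN : 1 ≤ N) (hθ1 : 1 ≤ θ) (hθn : θ ≤ n)
    {ι : Type*} [Fintype ι]
    (A : ι → Fin n → Set (Fin N → Bool))
    (hdisj : ∀ i j, i ≠ j →
      Disjoint {M : Fin n → Fin N → Bool | ∀ r, M r ∈ A i r}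
               {M : Fin n → Fin N → Bool | ∀ r, M r ∈ A j r})
    (hcover : ⋃ i, {M : Fin n → Fin N → Bool | ∀ r, M r ∈ A i r} = Set.univ)
    (hmono : ∀ i, ∀ M ∈ {M : Fin n → Fin N → Bool | ∀ r, M r ∈ A i r},
                  ∀ M' ∈ {M : Fin n → Fin N → Bool | ∀ r, M r ∈ A i r},
      blockThreshold θ M = blockThreshold θ M') :
    ((n + 1).choose θ) ^ N ≤ Fintype.card ι := by
  classical
  obtain ⟨t, rfl⟩ : ∃ t, θ = t + 1 := ⟨θ - 1, by omega⟩
  -- injection from the fooling set into ι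
  have key : Fintype.card {M : Fin n → Fin N → Bool // ∀ j,
      (Finset.univ.filter fun r => M r j = true).card = t + 1 ∨
      (Finset.univ.filter fun r => M r j = true).card = t}
      ≤ Fintype.card ι := by
    have hbox : ∀ M : Fin n → Fin N → Bool, ∃ i, ∀ r, M r ∈ A i r := by
      intro M
      have : M ∈ ⋃ i, {M : Fin n → Fin N → Bool | ∀ r, M r ∈ A i r} :=
        hcover ▸ Set.mem_univ M
      simpa using this
    choose f hf using hbox
    apply Fintype.card_le_of_injective (fun M => f M.1)
    rintro ⟨M, hM⟩ ⟨M', hM'⟩ hEq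
    simp only at hEq
    refine Subtype.ext (funext fun r => funext fun j => ?_)
    by_contra hne
    have hMbox : ∀ r, M r ∈ A (f M) r := hf M
    have hM'box : ∀ r, M' r ∈ A (f M) r := by rw [hEq]; exact hf M'
    have heq : blockThreshold (t + 1) M = blockThreshold (t + 1) M' :=
      hmono (f M) M hMbox M' hM'box
    have heqj := congrFun heq j
    simp only [blockThreshold, decide_eq_decide] at heqj; simp only [colWeight] at heqj
    have hXY : (Finset.univ.filter fun r => M r j = true)
        ≠ (Finset.univ.filter fun r => M' r j = true) := by
      intro h
      apply hne
      have h2 : r ∈ (Finset.univ.filter fun r => M r j = true) ↔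
          r ∈ (Finset.univ.filter fun r => M' r j = true) := by rw [h]
      simp only [Finset.mem_filter, Finset.mem_univ, true_and] at h2
      show M r j = M' r j
      cases hb : M r j <;> cases hb' : M' r j <;> simp_all
    rcases hM j with hX | hX <;> rcases hM' j with hY | hY
    · -- both weight t+1 : intersection
      have hX' : (Finset.univ.filter fun r => M r j = true).card = t + 1 := hX
      have hY' : (Finset.univ.filter fun r => M' r j = true).card = t + 1 := hY
      have hM''box : ∀ r', (fun r' => if M' r' j = true then M r' else M' r') r' ∈ A (f M) r' := by
        intro r'
        by_cases h : M' r' j = true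
        · simpa [h] using hMbox r'
        · simpa [h] using hM'box r'
      have heq2 := congrFun (hmono (f M) _ hM''box M hMbox) j
      simp only [blockThreshold, decide_eq_decide] at heq2; simp only [colWeight] at heq2
      have hfilt : (Finset.univ.filter fun i => (if M' i j = true then M i else M' i) j = true)
          = (Finset.univ.filter fun r => M r j = true)
            ∩ (Finset.univ.filter fun r => M' r j = true) := by
        ext i
        by_cases h : M' i j = true <;> simp [h]
      have hcc := congrArg Finset.card hfilt
      have hcard : ((Finset.univ.filter fun r => M r j = true)
          ∩ (Finset.univ.filter fun r => M' r j = true)).card < t + 1 := by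
        by_contra hle
        push_neg at hle
        have h1 : (Finset.univ.filter fun r => M r j = true)
            ∩ (Finset.univ.filter fun r => M' r j = true)
            = (Finset.univ.filter fun r => M r j = true) :=
          Finset.eq_of_subset_of_card_le Finset.inter_subset_left (by omega)
        have h2 : (Finset.univ.filter fun r => M r j = true)
            ⊆ (Finset.univ.filter fun r => M' r j = true) := by
          rw [← h1]; exact Finset.inter_subset_right
        exact hXY (Finset.eq_of_subset_of_card_le h2 (by omega))
      omega
    · -- weights t+1 and t : values already differ
      have hX' : (Finset.univ.filter fun r => M r j = true).card = t + 1 := hX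
      have hY' : (Finset.univ.filter fun r => M' r j = true).card = t := hY
      omega
    · have hX' : (Finset.univ.filter fun r => M r j = true).card = t := hX
      have hY' : (Finset.univ.filter fun r => M' r j = true).card = t + 1 := hY
      omega
    · -- both weight t : union
      have hX' : (Finset.univ.filter fun r => M r j = true).card = t := hX
      have hY' : (Finset.univ.filter fun r => M' r j = true).card = t := hY
      have hM''box : ∀ r', (fun r' => if M' r' j = true then M' r' else M r') r' ∈ A (f M) r' := by
        intro r'
        by_cases h : M' r' j = true
        · simpa [h] using hM'box r'
        · simpa [h] using hMbox r'
      have heq2 := congrFun (hmono (f M) _ hM''box M hMbox) j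
      simp only [blockThreshold, decide_eq_decide] at heq2; simp only [colWeight] at heq2
      have hfilt : (Finset.univ.filter fun i => (if M' i j = true then M' i else M i) j = true)
          = (Finset.univ.filter fun r => M r j = true)
            ∪ (Finset.univ.filter fun r => M' r j = true) := by
        ext i
        by_cases h : M' i j = true <;> simp [h]
      have hcc := congrArg Finset.card hfilt
      have hcard : t + 1 ≤ ((Finset.univ.filter fun r => M r j = true)
          ∪ (Finset.univ.filter fun r => M' r j = true)).card := by
        by_contra hle
        push_neg at hle
        have h1 : (Finset.univ.filter fun r => M' r j = true)
            = (Finset.univ.filter fun r => M r j = true)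
            ∪ (Finset.univ.filter fun r => M' r j = true) :=
          Finset.eq_of_subset_of_card_le Finset.subset_union_right (by omega)
        have h2 : (Finset.univ.filter fun r => M r j = true)
            ⊆ (Finset.univ.filter fun r => M' r j = true) := by
          rw [h1]; exact Finset.subset_union_left
        exact hXY (Finset.eq_of_subset_of_card_le h2 (by omega))
      omega
  -- cardinality of the fooling set
  have hcardS : Fintype.card {M : Fin n → Fin N → Bool // ∀ j,
      (Finset.univ.filter fun r => M r j = true).card = t + 1 ∨
      (Finset.univ.filter fun r => M r j = true).card = t}
      = ((n + 1).choose (t + 1)) ^ N := by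
    have e : {M : Fin n → Fin N → Bool // ∀ j,
        (Finset.univ.filter fun r => M r j = true).card = t + 1 ∨
        (Finset.univ.filter fun r => M r j = true).card = t}
        ≃ (Fin N → {v : Fin n → Bool //
            (Finset.univ.filter fun r => v r = true).card = t + 1 ∨
            (Finset.univ.filter fun r => v r = true).card = t}) :=
      { toFun := fun M j => ⟨fun r => M.1 r j, M.2 j⟩
        invFun := fun g => ⟨fun r j => (g j).1 r, fun j => (g j).2⟩
        left_inv := fun M => rfl
        right_inv := fun g => rfl }
    rw [Fintype.card_congr e, Fintype.card_fun]
    congr 1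
    · rw [card_weight_or n (t + 1) t (Nat.succ_ne_self t), Nat.choose_succ_succ]
      simp only [Nat.succ_eq_add_one]
      exact Nat.add_comm _ _
    · simp
  exact hcardS ▸ key
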